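/- Kernel decomposition for composable Mayer–Vietoris maps. With the maps f₁₂, f₂₃, f, f₍₁₂,₃₎, f₍₁,₂₃₎ as in the context: the map a ↦ (a, 0) carries ker(f₁₂) into ker(f), the projection (a₂, a₃) ↦ a₃ carries ker(f) into ker(f₍₁₂,₃₎), and the resulting sequence 0 → ker(f₁₂) → ker(f) → ker(f₍₁₂,₃₎) → 0 is a short exact sequence. Symmetrically, a ↦ (0, a) carries ker(f₂₃) into ker(f), (a₂, a₃) ↦ a₂ carries ker(f) into ker(f₍₁,₂₃₎), and 0 → ker(f₂₃) → ker(f) → ker(f₍₁,₂₃₎) → 0 is a short exact sequence. In particular ker(f) ≅ ker(f₁₂) ⊕ ker(f₍₁₂,₃₎) ≅ ker(f₂₃) ⊕ ker(f₍₁,₂₃₎). -/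

import Mathlib

lemma mv_split_aux {U V W : Type*} [AddCommGroup U] [Module ℝ U]
    [AddCommGroup V] [Module ℝ V] [AddCommGroup W] [Module ℝ W]
    (ι : U →ₗ[ℝ] V) (π : V →ₗ[ℝ] W)
    (hι : Function.Injective ι) (hπ : Function.Surjective π)
    (hex : LinearMap.range ι = LinearMap.ker π) :
    Nonempty (V ≃ₗ[ℝ] U × W) := by
  obtain ⟨q, hq⟩ := Submodule.exists_isCompl (LinearMap.ker π)
  have eU : U ≃ₗ[ℝ] LinearMap.ker π :=
    (LinearEquiv.ofInjective ι hι).trans (LinearEquiv.ofEq _ _ hex)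
  have eW : q ≃ₗ[ℝ] W :=
    (Submodule.quotientEquivOfIsCompl _ _ hq).symm.trans
      (π.quotKerEquivOfSurjective hπ)
  exact ⟨(Submodule.prodEquivOfIsCompl _ q hq).symm.trans (eU.symm.prodCongr eW)⟩

/-- **Kernel decomposition for composable Mayer–Vietoris maps.**  With
`f(a₂, a₃) = ((f₁₂a₂)₁, (f₁₂a₂)₂ + (f₂₃a₃)₁, (f₂₃a₃)₂)`,
`f₍₁₂,₃₎ = g` and `f₍₁,₂₃₎ = g'` as in the paper, there are short exact sequences
`0 → ker f₁₂ → ker f → ker f₍₁₂,₃₎ → 0` (via `a ↦ (a,0)` and `(a₂,a₃) ↦ a₃`) and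
`0 → ker f₂₃ → ker f → ker f₍₁,₂₃₎ → 0` (via `a ↦ (0,a)` and `(a₂,a₃) ↦ a₂`); in
particular `ker f ≅ ker f₁₂ ⊕ ker f₍₁₂,₃₎ ≅ ker f₂₃ ⊕ ker f₍₁,₂₃₎`. -/
theorem mayerVietoris_kernel_decomposition
    {A₂ A₃ B₁ B₂ B₃ : Type*}
    [AddCommGroup A₂] [Module ℝ A₂] [AddCommGroup A₃] [Module ℝ A₃]
    [AddCommGroup B₁] [Module ℝ B₁] [AddCommGroup B₂] [Module ℝ B₂]
    [AddCommGroup B₃] [Module ℝ B₃]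
    (f₁₂ : A₂ →ₗ[ℝ] B₁ × B₂) (f₂₃ : A₃ →ₗ[ℝ] B₂ × B₃)
    (f : A₂ × A₃ →ₗ[ℝ] B₁ × B₂ × B₃)
    (hf : ∀ p : A₂ × A₃,
      f p = ((f₁₂ p.1).1, ((f₁₂ p.1).2 + (f₂₃ p.2).1, (f₂₃ p.2).2)))
    (g : A₃ →ₗ[ℝ] ((B₁ × B₂) ⧸ LinearMap.range f₁₂) × B₃)
    (hg : ∀ a : A₃,
      g a = (Submodule.mkQ (LinearMap.range f₁₂) (0, (f₂₃ a).1), (f₂₃ a).2))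
    (g' : A₂ →ₗ[ℝ] B₁ × ((B₂ × B₃) ⧸ LinearMap.range f₂₃))
    (hg' : ∀ a : A₂,
      g' a = ((f₁₂ a).1, Submodule.mkQ (LinearMap.range f₂₃) ((f₁₂ a).2, 0))) :
    -- first short exact sequence
    (∀ a ∈ LinearMap.ker f₁₂, ((a, 0) : A₂ × A₃) ∈ LinearMap.ker f) ∧
    (∀ p ∈ LinearMap.ker f, p.2 ∈ LinearMap.ker g) ∧
    (∀ a ∈ LinearMap.ker f₁₂, ((a, 0) : A₂ × A₃) = 0 → a = 0) ∧
    (∀ p ∈ LinearMap.ker f, (p.2 = 0 ↔ ∃ a ∈ LinearMap.ker f₁₂, p = ((a, 0) : A₂ × A₃))) ∧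
    (∀ b ∈ LinearMap.ker g, ∃ p ∈ LinearMap.ker f, p.2 = b) ∧
    -- second short exact sequence
    (∀ a ∈ LinearMap.ker f₂₃, ((0, a) : A₂ × A₃) ∈ LinearMap.ker f) ∧
    (∀ p ∈ LinearMap.ker f, p.1 ∈ LinearMap.ker g') ∧
    (∀ a ∈ LinearMap.ker f₂₃, ((0, a) : A₂ × A₃) = 0 → a = 0) ∧
    (∀ p ∈ LinearMap.ker f, (p.1 = 0 ↔ ∃ a ∈ LinearMap.ker f₂₃, p = ((0, a) : A₂ × A₃))) ∧
    (∀ b ∈ LinearMap.ker g', ∃ p ∈ LinearMap.ker f, p.1 = b) ∧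
    -- the resulting direct sum decompositions
    Nonempty (↥(LinearMap.ker f) ≃ₗ[ℝ] ↥(LinearMap.ker f₁₂) × ↥(LinearMap.ker g)) ∧
    Nonempty (↥(LinearMap.ker f) ≃ₗ[ℝ] ↥(LinearMap.ker f₂₃) × ↥(LinearMap.ker g')) := by
  have h1 : ∀ a ∈ LinearMap.ker f₁₂, ((a, 0) : A₂ × A₃) ∈ LinearMap.ker f := by
    intro a ha
    simp only [LinearMap.mem_ker] at ha ⊢
    rw [hf]; simp [ha]
  have hker : ∀ p ∈ LinearMap.ker f, (f₁₂ p.1).1 = 0 ∧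
      (f₁₂ p.1).2 + (f₂₃ p.2).1 = 0 ∧ (f₂₃ p.2).2 = 0 := by
    intro p hp
    simp only [LinearMap.mem_ker] at hp
    rw [hf] at hp
    exact ⟨congrArg Prod.fst hp, congrArg (Prod.fst ∘ Prod.snd) hp,
      congrArg (Prod.snd ∘ Prod.snd) hp⟩
  have h2 : ∀ p ∈ LinearMap.ker f, p.2 ∈ LinearMap.ker g := by
    intro p hp
    obtain ⟨e1, e2, e3⟩ := hker p hp
    simp only [LinearMap.mem_ker]
    rw [hg, e3]
    have hmem : ((0 : B₁), (f₂₃ p.2).1) ∈ LinearMap.range f₁₂ := by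
      refine ⟨-p.1, ?_⟩
      rw [map_neg]
      exact Prod.ext (by simp [e1]) (neg_eq_of_add_eq_zero_right e2)
    exact Prod.ext (by simpa [Submodule.Quotient.mk_eq_zero] using hmem) rfl
  have h3 : ∀ a ∈ LinearMap.ker f₁₂, ((a, 0) : A₂ × A₃) = 0 → a = 0 := by
    intro a _ h
    exact congrArg Prod.fst h
  have h4 : ∀ p ∈ LinearMap.ker f,
      (p.2 = 0 ↔ ∃ a ∈ LinearMap.ker f₁₂, p = ((a, 0) : A₂ × A₃)) := by
    intro p hp
    constructor
    · intro h2z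
      obtain ⟨e1, e2, e3⟩ := hker p hp
      refine ⟨p.1, ?_, by rw [← h2z]⟩
      simp only [LinearMap.mem_ker]
      rw [h2z] at e2
      simp only [map_zero] at e2
      exact Prod.ext e1 (by simpa using e2)
    · rintro ⟨a, _, rfl⟩; rfl
  have h5 : ∀ b ∈ LinearMap.ker g, ∃ p ∈ LinearMap.ker f, p.2 = b := by
    intro b hb
    simp only [LinearMap.mem_ker, hg] at hb
    have e1 : (Submodule.mkQ (LinearMap.range f₁₂)) (0, (f₂₃ b).1) = 0 :=
      congrArg Prod.fst hb
    have e2 : (f₂₃ b).2 = 0 := congrArg Prod.snd hb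
    rw [Submodule.mkQ_apply, Submodule.Quotient.mk_eq_zero] at e1
    obtain ⟨a, ha⟩ := e1
    refine ⟨(-a, b), ?_, rfl⟩
    simp only [LinearMap.mem_ker]
    rw [hf]
    simp only [map_neg, ha]
    exact Prod.ext (by simp) (Prod.ext (by simp) (by simp [e2]))
  have h6 : ∀ a ∈ LinearMap.ker f₂₃, ((0, a) : A₂ × A₃) ∈ LinearMap.ker f := by
    intro a ha
    simp only [LinearMap.mem_ker] at ha ⊢
    rw [hf]; simp [ha]
  have h7 : ∀ p ∈ LinearMap.ker f, p.1 ∈ LinearMap.ker g' := by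
    intro p hp
    obtain ⟨e1, e2, e3⟩ := hker p hp
    simp only [LinearMap.mem_ker]
    rw [hg', e1]
    have hmem : ((f₁₂ p.1).2, (0 : B₃)) ∈ LinearMap.range f₂₃ := by
      refine ⟨-p.2, ?_⟩
      rw [map_neg]
      exact Prod.ext (by simpa using (neg_eq_of_add_eq_zero_left e2)) (by simp [e3])
    exact Prod.ext rfl (by simpa [Submodule.Quotient.mk_eq_zero] using hmem)
  have h8 : ∀ a ∈ LinearMap.ker f₂₃, ((0, a) : A₂ × A₃) = 0 → a = 0 := by
    intro a _ h
    exact congrArg Prod.snd h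
  have h9 : ∀ p ∈ LinearMap.ker f,
      (p.1 = 0 ↔ ∃ a ∈ LinearMap.ker f₂₃, p = ((0, a) : A₂ × A₃)) := by
    intro p hp
    constructor
    · intro h1z
      obtain ⟨e1, e2, e3⟩ := hker p hp
      refine ⟨p.2, ?_, by rw [← h1z]⟩
      simp only [LinearMap.mem_ker]
      rw [h1z] at e2
      simp only [map_zero, Prod.snd_zero, zero_add] at e2
      exact Prod.ext e2 e3
    · rintro ⟨a, _, rfl⟩; rfl
  have h10 : ∀ b ∈ LinearMap.ker g', ∃ p ∈ LinearMap.ker f, p.1 = b := by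
    intro b hb
    simp only [LinearMap.mem_ker, hg'] at hb
    have e1 : (f₁₂ b).1 = 0 := congrArg Prod.fst hb
    have e2 : (Submodule.mkQ (LinearMap.range f₂₃)) ((f₁₂ b).2, 0) = 0 :=
      congrArg Prod.snd hb
    rw [Submodule.mkQ_apply, Submodule.Quotient.mk_eq_zero] at e2
    obtain ⟨a, ha⟩ := e2
    refine ⟨(b, -a), ?_, rfl⟩
    simp only [LinearMap.mem_ker]
    rw [hf]
    simp only [map_neg, ha]
    exact Prod.ext (by simp [e1]) (Prod.ext (by simp) (by simp))
  refine ⟨h1, h2, h3, h4, h5, h6, h7, h8, h9, h10, ?_, ?_⟩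
  · let ι : ↥(LinearMap.ker f₁₂) →ₗ[ℝ] ↥(LinearMap.ker f) :=
      LinearMap.codRestrict _ ((LinearMap.inl ℝ A₂ A₃).comp (Submodule.subtype _))
        (fun x => h1 x x.2)
    let π : ↥(LinearMap.ker f) →ₗ[ℝ] ↥(LinearMap.ker g) :=
      LinearMap.codRestrict _ ((LinearMap.snd ℝ A₂ A₃).comp (Submodule.subtype _))
        (fun x => h2 x x.2)
    refine mv_split_aux ι π ?_ ?_ ?_
    · intro x y hxy
      have : ((x : A₂), (0 : A₃)) = ((y : A₂), (0 : A₃)) :=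
        congrArg Subtype.val hxy
      exact Subtype.ext (congrArg Prod.fst this)
    · rintro ⟨b, hb⟩
      obtain ⟨p, hp, hpb⟩ := h5 b hb
      exact ⟨⟨p, hp⟩, Subtype.ext hpb⟩
    · ext x
      simp only [LinearMap.mem_range, LinearMap.mem_ker]
      constructor
      · rintro ⟨a, rfl⟩
        exact Subtype.ext rfl
      · intro hx
        have hx2 : (x : A₂ × A₃).2 = 0 := congrArg Subtype.val hx
        obtain ⟨a, ha, hpa⟩ := (h4 x x.2).1 hx2
        exact ⟨⟨a, ha⟩, Subtype.ext hpa.symm⟩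
  · let ι : ↥(LinearMap.ker f₂₃) →ₗ[ℝ] ↥(LinearMap.ker f) :=
      LinearMap.codRestrict _ ((LinearMap.inr ℝ A₂ A₃).comp (Submodule.subtype _))
        (fun x => h6 x x.2)
    let π : ↥(LinearMap.ker f) →ₗ[ℝ] ↥(LinearMap.ker g') :=
      LinearMap.codRestrict _ ((LinearMap.fst ℝ A₂ A₃).comp (Submodule.subtype _))
        (fun x => h7 x x.2)
    refine mv_split_aux ι π ?_ ?_ ?_
    · intro x y hxy
      have : ((0 : A₂), (x : A₃)) = ((0 : A₂), (y : A₃)) :=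
        congrArg Subtype.val hxy
      exact Subtype.ext (congrArg Prod.snd this)
    · rintro ⟨b, hb⟩
      obtain ⟨p, hp, hpb⟩ := h10 b hb
      exact ⟨⟨p, hp⟩, Subtype.ext hpb⟩
    · ext x
      simp only [LinearMap.mem_range, LinearMap.mem_ker]
      constructor
      · rintro ⟨a, rfl⟩
        exact Subtype.ext rfl
      · intro hx
        have hx1 : (x : A₂ × A₃).1 = 0 := congrArg Subtype.val hx
        obtain ⟨a, ha, hpa⟩ := (h9 x x.2).1 hx1
        exact ⟨⟨a, ha⟩, Subtype.ext hpa.symm⟩
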